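/- arXiv:2602.02875 — 7 statements merged into one kernel-verified Lean document; each statement's English description precedes it below -/
import Mathlib

section
/- For all ω > 0, η > 0 and y ≥ 0, the integral of the Shiha density from 0 to y equals the Shiha cumulative distribution function: ∫₀^y f(t; ω, η) dt = 1 − (1/(ω + 3η)) · [ω + (3η + 4ωηy) e^{-ωy}] e^{-ωy}. -/
open Real MeasureTheory

noncomputable def shihaPdf (ω η y : ℝ) : ℝ :=
  ω / (ω + 3 * η) * (ω + (2 * η + 8 * ω * η * y) * Real.exp (-ω * y)) * Real.exp (-ω * y)

noncomputable def shihaCdf (ω η y : ℝ) : ℝ :=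
  1 - (1 / (ω + 3 * η)) * (ω + (3 * η + 4 * ω * η * y) * Real.exp (-ω * y)) * Real.exp (-ω * y)

lemma shiha_hasDerivAt (ω η : ℝ) (t : ℝ) :
    HasDerivAt (shihaCdf ω η) (shihaPdf ω η t) t := by
  have h1 : HasDerivAt (fun t : ℝ => -ω * t) (-ω) t := by
    simpa using (hasDerivAt_id t).const_mul (-ω)
  have hE : HasDerivAt (fun t : ℝ => Real.exp (-ω * t)) (Real.exp (-ω * t) * (-ω)) t := h1.exp
  have hlin : HasDerivAt (fun t : ℝ => 3 * η + 4 * ω * η * t) (4 * ω * η) t := by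
    simpa using ((hasDerivAt_id t).const_mul (4 * ω * η)).const_add (3 * η)
  have hinner : HasDerivAt (fun t : ℝ => ω + (3 * η + 4 * ω * η * t) * Real.exp (-ω * t))
      (4 * ω * η * Real.exp (-ω * t) + (3 * η + 4 * ω * η * t) * (Real.exp (-ω * t) * (-ω))) t :=
    (hlin.mul hE).const_add ω
  have hmul := hinner.mul hE
  have := ((hmul.const_mul (1 / (ω + 3 * η))).const_sub 1)
  convert this using 1
  · rfl
  · rfl
  · ext t; simp [shihaCdf, mul_assoc]
  · simp only [shihaPdf]; ring

theorem shiha_integral_pdf_eq_cdf (ω η : ℝ) (hω : 0 < ω) (hη : 0 < η) (y : ℝ) (hy : 0 ≤ y) :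
    (∫ t in (0 : ℝ)..y, shihaPdf ω η t) = shihaCdf ω η y := by
  have hne : ω + 3 * η ≠ 0 := by positivity
  have hcont : Continuous (shihaPdf ω η) := by
    unfold shihaPdf; fun_prop
  have h := intervalIntegral.integral_eq_sub_of_hasDerivAt
    (f := shihaCdf ω η) (f' := shihaPdf ω η)
    (fun t _ => shiha_hasDerivAt ω η t) (hcont.intervalIntegrable 0 y)
  rw [h]
  have h0 : shihaCdf ω η 0 = 0 := by
    simp [shihaCdf]
    field_simp
    ring
  rw [h0, sub_zero]
end

section
/- For all ω > 0, η > 0 and y ≥ 0, the Shiha density is the mixture f(y; ω, η) = p₁ · (ω e^{-ωy}) + p₂ · (2ω e^{-2ωy}) + p₃ · ((2ω)² y e^{-2ωy}), where p₁ = ω/(ω + 3η), p₂ = η/(ω + 3η), p₃ = 2η/(ω + 3η); here ω e^{-ωy}, 2ω e^{-2ωy}, and (2ω)² y e^{-2ωy} are respectively the densities of the Exp(ω), Exp(2ω), and Gamma(2, 2ω) distributions, and p₁ + p₂ + p₃ = 1. -/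
open Real

theorem shiha_pdf_mixture (ω η : ℝ) (hω : 0 < ω) (hη : 0 < η) (y : ℝ) (hy : 0 ≤ y) :
    shihaPdf ω η y
      = (ω / (ω + 3 * η)) * (ω * Real.exp (-ω * y))
        + (η / (ω + 3 * η)) * (2 * ω * Real.exp (-(2 * ω) * y))
        + (2 * η / (ω + 3 * η)) * ((2 * ω) ^ 2 * y * Real.exp (-(2 * ω) * y)) ∧
    (ω / (ω + 3 * η)) + (η / (ω + 3 * η)) + (2 * η / (ω + 3 * η)) = 1 := by
  have hden : ω + 3 * η ≠ 0 := by positivity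
  constructor
  · have h2 : Real.exp (-(2 * ω) * y) = Real.exp (-ω * y) * Real.exp (-ω * y) := by
      rw [← Real.exp_add]; ring_nf
    rw [shihaPdf, h2]; field_simp; ring
  · field_simp; ring
end

section
/- Let ω₁, η₁, ω₂, η₂ > 0. Then the stress–strength integral R = ∫₀^∞ f(y; ω₁, η₁) F(y; ω₂, η₂) dy equals 1 − (ω₁ / ((ω₁ + 3η₁)(ω₂ + 3η₂))) · [ ω₂ ( ω₁/(ω₁ + ω₂) + 2η₁/(2ω₁ + ω₂) + 8ω₁η₁/(2ω₁ + ω₂)² ) + 3η₂ ( ω₁/(ω₁ + 2ω₂) + η₁/(ω₁ + ω₂) + 2ω₁η₁/(ω₁ + ω₂)² ) + 4ω₂η₂ ( ω₁/(ω₁ + 2ω₂)² + η₁/(2(ω₁ + ω₂)²) + 2ω₁η₁/(ω₁ + ω₂)³ ) ]. -/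
open Real MeasureTheory

lemma pow_exp_integrableOn (n : ℕ) {a : ℝ} (ha : 0 < a) :
    MeasureTheory.IntegrableOn (fun y : ℝ => y ^ n * Real.exp (-a * y)) (Set.Ioi 0) := by
  have h := integrableOn_rpow_mul_exp_neg_mul_rpow (s := (n : ℝ)) (p := 1)
    (by exact_mod_cast neg_one_lt_zero.trans_le (Nat.cast_nonneg n)) one_pos ha
  refine h.congr_fun (fun x hx => ?_) measurableSet_Ioi
  simp only [Real.rpow_one, Real.rpow_natCast]

lemma pow_exp_integral (n : ℕ) {a : ℝ} (ha : 0 < a) :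
    ∫ y in Set.Ioi 0, y ^ n * Real.exp (-a * y) = (Nat.factorial n : ℝ) / a ^ (n + 1) := by
  have h := integral_rpow_mul_exp_neg_mul_Ioi (a := (n : ℝ) + 1) (by positivity) ha
  rw [show ((n : ℝ) + 1 - 1) = (n : ℝ) by ring] at h
  rw [show (∫ y in Set.Ioi (0:ℝ), y ^ n * Real.exp (-a * y))
      = ∫ t in Set.Ioi (0:ℝ), t ^ (n : ℝ) * Real.exp (-(a * t)) by
    refine setIntegral_congr_fun measurableSet_Ioi (fun t ht => ?_)
    rw [Real.rpow_natCast]; ring_nf]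
  rw [h, Real.Gamma_nat_eq_factorial,
    show ((n : ℝ) + 1) = ((n + 1 : ℕ) : ℝ) by push_cast; ring,
    Real.rpow_natCast, div_pow, one_pow, div_mul_eq_mul_div, one_mul]

lemma quad_exp_integrableOn (A B C : ℝ) {a : ℝ} (ha : 0 < a) :
    MeasureTheory.IntegrableOn
      (fun y : ℝ => (A + B * y + C * y ^ 2) * Real.exp (-a * y)) (Set.Ioi 0) := by
  have h0 := (pow_exp_integrableOn 0 ha).const_mul A
  have h1 := (pow_exp_integrableOn 1 ha).const_mul B
  have h2 := (pow_exp_integrableOn 2 ha).const_mul C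
  refine MeasureTheory.IntegrableOn.congr_fun ((h0.add h1).add h2)
    (fun x _ => ?_) measurableSet_Ioi
  simp only [Pi.add_apply]; ring

lemma quad_exp_integral (A B C : ℝ) {a : ℝ} (ha : 0 < a) :
    ∫ y in Set.Ioi 0, (A + B * y + C * y ^ 2) * Real.exp (-a * y)
      = A / a + B / a ^ 2 + 2 * C / a ^ 3 := by
  have h0 := (pow_exp_integrableOn 0 ha).const_mul A
  have h1 := (pow_exp_integrableOn 1 ha).const_mul B
  have h2 := (pow_exp_integrableOn 2 ha).const_mul C
  have h01 : MeasureTheory.IntegrableOn (fun y : ℝ => A * (y ^ 0 * Real.exp (-a * y))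
      + B * (y ^ 1 * Real.exp (-a * y))) (Set.Ioi 0) := h0.add h1
  rw [show (fun y : ℝ => (A + B * y + C * y ^ 2) * Real.exp (-a * y))
      = fun y : ℝ => (A * (y ^ 0 * Real.exp (-a * y)) + B * (y ^ 1 * Real.exp (-a * y)))
          + C * (y ^ 2 * Real.exp (-a * y)) by funext y; ring]
  rw [integral_add h01 h2, integral_add h0 h1, integral_const_mul, integral_const_mul,
    integral_const_mul, pow_exp_integral 0 ha, pow_exp_integral 1 ha, pow_exp_integral 2 ha]
  norm_num [Nat.factorial]
  ring

lemma six_quad_integral {a1 a2 a3 a4 a5 a6 : ℝ} (h1 : 0 < a1) (h2 : 0 < a2) (h3 : 0 < a3)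
    (h4 : 0 < a4) (h5 : 0 < a5) (h6 : 0 < a6)
    (A1 B1 C1 A2 B2 C2 A3 B3 C3 A4 B4 C4 A5 B5 C5 A6 B6 C6 : ℝ) :
    ∫ y in Set.Ioi 0,
      ((A1 + B1 * y + C1 * y ^ 2) * Real.exp (-a1 * y)
       + ((A2 + B2 * y + C2 * y ^ 2) * Real.exp (-a2 * y)
       + ((A3 + B3 * y + C3 * y ^ 2) * Real.exp (-a3 * y)
       + ((A4 + B4 * y + C4 * y ^ 2) * Real.exp (-a4 * y)
       + ((A5 + B5 * y + C5 * y ^ 2) * Real.exp (-a5 * y)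
       + (A6 + B6 * y + C6 * y ^ 2) * Real.exp (-a6 * y))))))
      = (A1 / a1 + B1 / a1 ^ 2 + 2 * C1 / a1 ^ 3)
        + ((A2 / a2 + B2 / a2 ^ 2 + 2 * C2 / a2 ^ 3)
        + ((A3 / a3 + B3 / a3 ^ 2 + 2 * C3 / a3 ^ 3)
        + ((A4 / a4 + B4 / a4 ^ 2 + 2 * C4 / a4 ^ 3)
        + ((A5 / a5 + B5 / a5 ^ 2 + 2 * C5 / a5 ^ 3)
        + (A6 / a6 + B6 / a6 ^ 2 + 2 * C6 / a6 ^ 3))))) := by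
  have i1 := quad_exp_integrableOn A1 B1 C1 h1
  have i2 := quad_exp_integrableOn A2 B2 C2 h2
  have i3 := quad_exp_integrableOn A3 B3 C3 h3
  have i4 := quad_exp_integrableOn A4 B4 C4 h4
  have i5 := quad_exp_integrableOn A5 B5 C5 h5
  have i6 := quad_exp_integrableOn A6 B6 C6 h6
  have t56 : MeasureTheory.IntegrableOn (fun y : ℝ => (A5 + B5 * y + C5 * y ^ 2) * Real.exp (-a5 * y)
      + (A6 + B6 * y + C6 * y ^ 2) * Real.exp (-a6 * y)) (Set.Ioi 0) := i5.add i6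
  have t456 : MeasureTheory.IntegrableOn (fun y : ℝ => (A4 + B4 * y + C4 * y ^ 2) * Real.exp (-a4 * y)
      + ((A5 + B5 * y + C5 * y ^ 2) * Real.exp (-a5 * y)
      + (A6 + B6 * y + C6 * y ^ 2) * Real.exp (-a6 * y))) (Set.Ioi 0) := i4.add t56
  have t3456 : MeasureTheory.IntegrableOn (fun y : ℝ => (A3 + B3 * y + C3 * y ^ 2) * Real.exp (-a3 * y)
      + ((A4 + B4 * y + C4 * y ^ 2) * Real.exp (-a4 * y)
      + ((A5 + B5 * y + C5 * y ^ 2) * Real.exp (-a5 * y)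
      + (A6 + B6 * y + C6 * y ^ 2) * Real.exp (-a6 * y)))) (Set.Ioi 0) := i3.add t456
  have t23456 : MeasureTheory.IntegrableOn (fun y : ℝ => (A2 + B2 * y + C2 * y ^ 2) * Real.exp (-a2 * y)
      + ((A3 + B3 * y + C3 * y ^ 2) * Real.exp (-a3 * y)
      + ((A4 + B4 * y + C4 * y ^ 2) * Real.exp (-a4 * y)
      + ((A5 + B5 * y + C5 * y ^ 2) * Real.exp (-a5 * y)
      + (A6 + B6 * y + C6 * y ^ 2) * Real.exp (-a6 * y))))) (Set.Ioi 0) := i2.add t3456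
  rw [integral_add i1 t23456, integral_add i2 t3456, integral_add i3 t456,
    integral_add i4 t56, integral_add i5 i6,
    quad_exp_integral A1 B1 C1 h1, quad_exp_integral A2 B2 C2 h2, quad_exp_integral A3 B3 C3 h3,
    quad_exp_integral A4 B4 C4 h4, quad_exp_integral A5 B5 C5 h5, quad_exp_integral A6 B6 C6 h6]

set_option maxHeartbeats 1000000 in
lemma bracket_key (ω₁ η₁ ω₂ η₂ k : ℝ)
    (h3 : ω₁ + ω₂ ≠ 0) (h4 : ω₁ + 2 * ω₂ ≠ 0) (h5 : 2 * ω₁ + ω₂ ≠ 0) :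
    (-(k * (ω₁ * ω₂)) / (ω₁ + ω₂))
    + ((-(k * (3 * ω₁ * η₂)) / (ω₁ + 2 * ω₂) + -(k * (4 * ω₁ * ω₂ * η₂)) / (ω₁ + 2 * ω₂) ^ 2)
    + ((-(k * (2 * ω₂ * η₁)) / (2 * ω₁ + ω₂) + -(k * (8 * ω₁ * ω₂ * η₁)) / (2 * ω₁ + ω₂) ^ 2)
    + (-(k * (6 * η₁ * η₂)) / (2 * ω₁ + 2 * ω₂)
        + -(k * (8 * ω₂ * η₁ * η₂ + 24 * ω₁ * η₁ * η₂)) / (2 * ω₁ + 2 * ω₂) ^ 2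
        + 2 * -(k * (32 * ω₁ * ω₂ * η₁ * η₂)) / (2 * ω₁ + 2 * ω₂) ^ 3)))
    = -(k * (ω₂ * (ω₁ / (ω₁ + ω₂) + 2 * η₁ / (2 * ω₁ + ω₂) + 8 * ω₁ * η₁ / (2 * ω₁ + ω₂) ^ 2)
        + 3 * η₂ * (ω₁ / (ω₁ + 2 * ω₂) + η₁ / (ω₁ + ω₂) + 2 * ω₁ * η₁ / (ω₁ + ω₂) ^ 2)
        + 4 * ω₂ * η₂ * (ω₁ / (ω₁ + 2 * ω₂) ^ 2 + η₁ / (2 * (ω₁ + ω₂) ^ 2)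
            + 2 * ω₁ * η₁ / (ω₁ + ω₂) ^ 3))) := by
  have h6 : 2 * ω₁ + 2 * ω₂ ≠ 0 := by intro h; exact h3 (by linarith [h])
  have h4' : ω₁ + ω₂ * 2 ≠ 0 := by rwa [mul_comm]
  have h5' : ω₁ * 2 + ω₂ ≠ 0 := by rwa [mul_comm]
  field_simp
  ring

lemma one_key (ω₁ η₁ : ℝ) (hω₁ : ω₁ ≠ 0) (hd : ω₁ + 3 * η₁ ≠ 0) :
    (ω₁ / (ω₁ + 3 * η₁) * ω₁ / ω₁ + 0 / ω₁ ^ 2 + 2 * 0 / ω₁ ^ 3)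
    + (ω₁ / (ω₁ + 3 * η₁) * (2 * η₁) / (2 * ω₁)
        + ω₁ / (ω₁ + 3 * η₁) * (8 * ω₁ * η₁) / (2 * ω₁) ^ 2 + 2 * 0 / (2 * ω₁) ^ 3) = 1 := by
  field_simp
  ring

set_option maxHeartbeats 1000000 in
theorem shiha_stress_strength (ω₁ η₁ ω₂ η₂ : ℝ)
    (hω₁ : 0 < ω₁) (hη₁ : 0 < η₁) (hω₂ : 0 < ω₂) (hη₂ : 0 < η₂) :
    (∫ y in Set.Ioi (0 : ℝ), shihaPdf ω₁ η₁ y * shihaCdf ω₂ η₂ y)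
      = 1 - (ω₁ / ((ω₁ + 3 * η₁) * (ω₂ + 3 * η₂))) *
          (ω₂ * (ω₁ / (ω₁ + ω₂) + 2 * η₁ / (2 * ω₁ + ω₂) + 8 * ω₁ * η₁ / (2 * ω₁ + ω₂) ^ 2)
           + 3 * η₂ * (ω₁ / (ω₁ + 2 * ω₂) + η₁ / (ω₁ + ω₂) + 2 * ω₁ * η₁ / (ω₁ + ω₂) ^ 2)
           + 4 * ω₂ * η₂ * (ω₁ / (ω₁ + 2 * ω₂) ^ 2 + η₁ / (2 * (ω₁ + ω₂) ^ 2)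
               + 2 * ω₁ * η₁ / (ω₁ + ω₂) ^ 3)) := by
  have hpt : (fun y : ℝ => shihaPdf ω₁ η₁ y * shihaCdf ω₂ η₂ y) = fun y : ℝ =>
      (ω₁ / (ω₁ + 3 * η₁) * ω₁ + 0 * y + 0 * y ^ 2) * Real.exp (-ω₁ * y)
      + ((ω₁ / (ω₁ + 3 * η₁) * (2 * η₁) + ω₁ / (ω₁ + 3 * η₁) * (8 * ω₁ * η₁) * y + 0 * y ^ 2)
            * Real.exp (-(2 * ω₁) * y)
      + ((-(ω₁ / (ω₁ + 3 * η₁) * (1 / (ω₂ + 3 * η₂)) * (ω₁ * ω₂)) + 0 * y + 0 * y ^ 2)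
            * Real.exp (-(ω₁ + ω₂) * y)
      + ((-(ω₁ / (ω₁ + 3 * η₁) * (1 / (ω₂ + 3 * η₂)) * (3 * ω₁ * η₂))
            + -(ω₁ / (ω₁ + 3 * η₁) * (1 / (ω₂ + 3 * η₂)) * (4 * ω₁ * ω₂ * η₂)) * y + 0 * y ^ 2)
            * Real.exp (-(ω₁ + 2 * ω₂) * y)
      + ((-(ω₁ / (ω₁ + 3 * η₁) * (1 / (ω₂ + 3 * η₂)) * (2 * ω₂ * η₁))
            + -(ω₁ / (ω₁ + 3 * η₁) * (1 / (ω₂ + 3 * η₂)) * (8 * ω₁ * ω₂ * η₁)) * y + 0 * y ^ 2)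
            * Real.exp (-(2 * ω₁ + ω₂) * y)
      + (-(ω₁ / (ω₁ + 3 * η₁) * (1 / (ω₂ + 3 * η₂)) * (6 * η₁ * η₂))
            + -(ω₁ / (ω₁ + 3 * η₁) * (1 / (ω₂ + 3 * η₂)) * (8 * ω₂ * η₁ * η₂ + 24 * ω₁ * η₁ * η₂)) * y
            + -(ω₁ / (ω₁ + 3 * η₁) * (1 / (ω₂ + 3 * η₂)) * (32 * ω₁ * ω₂ * η₁ * η₂)) * y ^ 2)
            * Real.exp (-(2 * ω₁ + 2 * ω₂) * y))))) := by
    funext y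
    unfold shihaPdf shihaCdf
    rw [show -(2 * ω₁) * y = -ω₁ * y + -ω₁ * y by ring, Real.exp_add,
      show -(ω₁ + ω₂) * y = -ω₁ * y + -ω₂ * y by ring, Real.exp_add,
      show -(ω₁ + 2 * ω₂) * y = -ω₁ * y + (-ω₂ * y + -ω₂ * y) by ring, Real.exp_add, Real.exp_add,
      show -(2 * ω₁ + ω₂) * y = -ω₁ * y + (-ω₁ * y + -ω₂ * y) by ring, Real.exp_add, Real.exp_add,
      show -(2 * ω₁ + 2 * ω₂) * y = -ω₁ * y + (-ω₁ * y + (-ω₂ * y + -ω₂ * y)) by ring,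
      Real.exp_add, Real.exp_add, Real.exp_add]
    ring
  rw [hpt, six_quad_integral hω₁ (by positivity) (by positivity) (by positivity)
    (by positivity) (by positivity)]
  have hd1 : ω₁ + 3 * η₁ ≠ 0 := by positivity
  have hd2 : ω₂ + 3 * η₂ ≠ 0 := by positivity
  have hd3 : ω₁ + ω₂ ≠ 0 := by positivity
  have hd4 : ω₁ + 2 * ω₂ ≠ 0 := by positivity
  have hd5 : 2 * ω₁ + ω₂ ≠ 0 := by positivity
  have hd6 : 2 * ω₁ + 2 * ω₂ ≠ 0 := by positivity
  rw [show ω₁ / ((ω₁ + 3 * η₁) * (ω₂ + 3 * η₂)) = ω₁ / (ω₁ + 3 * η₁) * (1 / (ω₂ + 3 * η₂)) by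
    rw [div_mul_eq_div_div, div_eq_mul_inv (ω₁ / (ω₁ + 3 * η₁)), one_div]]
  have h12 := one_key ω₁ η₁ (ne_of_gt hω₁) hd1
  have hbk := bracket_key ω₁ η₁ ω₂ η₂ (ω₁ / (ω₁ + 3 * η₁) * (1 / (ω₂ + 3 * η₂))) hd3 hd4 hd5
  linear_combination h12 + hbk
end

section
/- For all ω > 0 and η > 0, the stress–strength integral of a Shiha strength Y₁ ~ Sh(ω, η) against an exponential stress Y₂ ~ Exp(ω) satisfies ∫₀^∞ f(y; ω, η) (1 − e^{-ωy}) dy = (9ω + 26η) / (18(ω + 3η)). -/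
open Real MeasureTheory

open Set in
lemma my_int_exp {b : ℝ} (hb : 0 < b) :
    ∫ y in Ioi (0:ℝ), Real.exp (-(b * y)) = 1 / b := by
  have := integral_rpow_mul_exp_neg_mul_Ioi (a := 1) (r := b) one_pos hb
  simpa [Real.Gamma_one] using this

open Set in
lemma my_int_id_exp {b : ℝ} (hb : 0 < b) :
    ∫ y in Ioi (0:ℝ), y * Real.exp (-(b * y)) = 1 / b ^ 2 := by
  have h := integral_rpow_mul_exp_neg_mul_Ioi (a := 2) (r := b) two_pos hb
  have h2 : ∀ y : ℝ, y ^ ((2:ℝ) - 1) = y := fun y => by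
    norm_num
  rw [show ((1:ℝ)/b) ^ (2:ℝ) = 1 / b ^ 2 by
    rw [show (2:ℝ) = ((2:ℕ):ℝ) by norm_num, Real.rpow_natCast]; ring] at h
  rw [Real.Gamma_two, mul_one] at h
  rw [← h]
  refine setIntegral_congr_fun measurableSet_Ioi (fun y _ => ?_)
  rw [h2]

open Set in
lemma my_integrable_exp {b : ℝ} (hb : 0 < b) :
    IntegrableOn (fun y : ℝ => Real.exp (-(b * y))) (Ioi 0) := by
  simpa [neg_mul] using exp_neg_integrableOn_Ioi 0 hb

open Set in
lemma my_integrable_id_exp {b : ℝ} (hb : 0 < b) :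
    IntegrableOn (fun y : ℝ => y * Real.exp (-(b * y))) (Ioi 0) := by
  have := integrableOn_rpow_mul_exp_neg_mul_rpow (p := 1) (s := 1) (by norm_num) one_pos hb
  refine this.congr_fun (fun y hy => ?_) measurableSet_Ioi
  simp [Real.rpow_one, neg_mul]

open Set in
lemma my_key {b : ℝ} (hb : 0 < b) (A B C D E : ℝ) :
    ∫ y in Ioi (0:ℝ),
      (A * Real.exp (-(b * y)) + B * Real.exp (-(2 * b * y)) + C * (y * Real.exp (-(2 * b * y)))
        + D * Real.exp (-(3 * b * y)) + E * (y * Real.exp (-(3 * b * y))))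
      = A / b + B / (2 * b) + C / (2 * b) ^ 2 + D / (3 * b) + E / (3 * b) ^ 2 := by
  have h2b : (0:ℝ) < 2 * b := by linarith
  have h3b : (0:ℝ) < 3 * b := by linarith
  have i1 := (my_integrable_exp hb).const_mul A
  have i2 := (my_integrable_exp h2b).const_mul B
  have i3 := (my_integrable_id_exp h2b).const_mul C
  have i4 := (my_integrable_exp h3b).const_mul D
  have i5 := (my_integrable_id_exp h3b).const_mul E
  have i12 : IntegrableOn (fun y : ℝ => A * Real.exp (-(b * y)) + B * Real.exp (-(2 * b * y)))
      (Ioi 0) := i1.add i2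
  have i123 : IntegrableOn (fun y : ℝ => A * Real.exp (-(b * y)) + B * Real.exp (-(2 * b * y))
      + C * (y * Real.exp (-(2 * b * y)))) (Ioi 0) := i12.add i3
  have i1234 : IntegrableOn (fun y : ℝ => A * Real.exp (-(b * y)) + B * Real.exp (-(2 * b * y))
      + C * (y * Real.exp (-(2 * b * y))) + D * Real.exp (-(3 * b * y))) (Ioi 0) := i123.add i4
  rw [integral_add i1234 i5,
      integral_add i123 i4,
      integral_add i12 i3,
      integral_add i1 i2,
      integral_const_mul, integral_const_mul, integral_const_mul, integral_const_mul,
      integral_const_mul,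
      my_int_exp hb, my_int_exp h2b, my_int_exp h3b, my_int_id_exp h2b, my_int_id_exp h3b]
  field_simp

theorem shiha_stress_strength_exp_stress (ω η : ℝ) (hω : 0 < ω) (hη : 0 < η) :
    (∫ y in Set.Ioi (0 : ℝ), shihaPdf ω η y * (1 - Real.exp (-ω * y)))
      = (9 * ω + 26 * η) / (18 * (ω + 3 * η)) := by
  set c : ℝ := ω / (ω + 3 * η) with hc
  have hden : (0:ℝ) < ω + 3 * η := by linarith
  have hrw : ∀ y ∈ Set.Ioi (0:ℝ), shihaPdf ω η y * (1 - Real.exp (-ω * y))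
      = (c * ω) * Real.exp (-(ω * y)) + (c * (2 * η) - c * ω) * Real.exp (-(2 * ω * y))
        + (c * (8 * ω * η)) * (y * Real.exp (-(2 * ω * y)))
        + (-(c * (2 * η))) * Real.exp (-(3 * ω * y))
        + (-(c * (8 * ω * η))) * (y * Real.exp (-(3 * ω * y))) := by
    intro y _
    have h2 : Real.exp (-(2 * ω * y)) = Real.exp (-ω * y) * Real.exp (-ω * y) := by
      rw [← Real.exp_add]; ring_nf
    have h3 : Real.exp (-(3 * ω * y))
        = Real.exp (-ω * y) * Real.exp (-ω * y) * Real.exp (-ω * y) := by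
      rw [← Real.exp_add, ← Real.exp_add]; ring_nf
    simp only [shihaPdf, h2, h3]
    rw [hc]; ring
  rw [setIntegral_congr_fun measurableSet_Ioi hrw, my_key hω]
  rw [hc]
  field_simp
  ring
end

section
/- For all ω > 0, η > 0 and all real t < ω, the moment generating function of the Shiha distribution satisfies ∫₀^∞ e^{ty} f(y; ω, η) dy = (ω/(ω + 3η)) · [ ω/(ω − t) + 2η/(2ω − t) + 8ωη/(2ω − t)² ], which equals (4ω⁴ + 12ω³η − 4ω³t − 14ω²ηt + ω²t² + 2ωηt²) / ((ω + 3η)(ω − t)(2ω − t)²). -/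
open Real MeasureTheory
open Set Filter Asymptotics

lemma int_exp {r : ℝ} (hr : 0 < r) :
    ∫ y in Ioi (0:ℝ), Real.exp (-(r*y)) = 1/r := by
  have := Real.integral_rpow_mul_exp_neg_mul_Ioi (a := 1) one_pos hr
  simpa [Real.Gamma_one, Real.rpow_one] using this

lemma int_mul_exp {r : ℝ} (hr : 0 < r) :
    ∫ y in Ioi (0:ℝ), y * Real.exp (-(r*y)) = 1/r^2 := by
  have h := Real.integral_rpow_mul_exp_neg_mul_Ioi (a := 2) two_pos hr
  have h2 : Real.Gamma 2 = 1 := by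
    rw [show (2:ℝ) = 1 + 1 by norm_num, Real.Gamma_add_one one_ne_zero, Real.Gamma_one, mul_one]
  have h3 : ((1:ℝ)/r) ^ (2:ℝ) = 1/r^2 := by
    rw [show (2:ℝ) = ((2:ℕ):ℝ) by norm_num, Real.rpow_natCast, div_pow, one_pow]
  rw [h2, mul_one, h3] at h
  rw [← h]
  refine setIntegral_congr_fun measurableSet_Ioi (fun x hx => ?_)
  rw [show (2:ℝ) - 1 = 1 by norm_num, Real.rpow_one]

lemma integ_mul_exp {r : ℝ} (hr : 0 < r) :
    IntegrableOn (fun y : ℝ => y * Real.exp (-(r*y))) (Ioi 0) := by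
  apply integrable_of_isBigO_exp_neg (b := r/2) (by linarith)
  · fun_prop
  · have h := tendsto_rpow_mul_exp_neg_mul_atTop_nhds_zero 1 (r/2) (by linarith)
    apply IsLittleO.isBigO
    apply isLittleO_of_tendsto (fun x hx => absurd hx (Real.exp_ne_zero _))
    have he : ∀ᶠ x in atTop, x * Real.exp (-(r*x)) / Real.exp (-(r/2) * x)
        = x ^ (1:ℝ) * Real.exp (-(r/2) * x) := by
      filter_upwards [eventually_gt_atTop 0] with x hx
      rw [Real.rpow_one, div_eq_iff (Real.exp_ne_zero _), mul_assoc, ← Real.exp_add]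
      ring_nf
    rw [tendsto_congr' he]
    exact h

theorem shiha_mgf (ω η : ℝ) (hω : 0 < ω) (hη : 0 < η) (t : ℝ) (ht : t < ω) :
    (∫ y in Set.Ioi (0 : ℝ), Real.exp (t * y) * shihaPdf ω η y)
      = ω / (ω + 3 * η) *
          (ω / (ω - t) + 2 * η / (2 * ω - t) + 8 * ω * η / (2 * ω - t) ^ 2) ∧
    ω / (ω + 3 * η) * (ω / (ω - t) + 2 * η / (2 * ω - t) + 8 * ω * η / (2 * ω - t) ^ 2)
      = (4 * ω ^ 4 + 12 * ω ^ 3 * η - 4 * ω ^ 3 * t - 14 * ω ^ 2 * η * t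
          + ω ^ 2 * t ^ 2 + 2 * ω * η * t ^ 2)
        / ((ω + 3 * η) * (ω - t) * (2 * ω - t) ^ 2) := by
  have hd : (0:ℝ) < ω + 3 * η := by linarith
  have hr1 : (0:ℝ) < ω - t := by linarith
  have hr2 : (0:ℝ) < 2 * ω - t := by linarith
  set c := ω / (ω + 3 * η) with hc
  constructor
  · have key : ∀ y : ℝ, Real.exp (t * y) * shihaPdf ω η y
        = c * ω * Real.exp (-((ω - t) * y)) + c * (2 * η) * Real.exp (-((2 * ω - t) * y))
          + c * (8 * ω * η) * (y * Real.exp (-((2 * ω - t) * y))) := by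
      intro y
      unfold shihaPdf
      rw [show -((ω - t) * y) = t * y + -ω * y by ring,
          show -((2 * ω - t) * y) = t * y + (-ω * y + -ω * y) by ring,
          Real.exp_add, Real.exp_add, Real.exp_add]
      ring
    have I1 : IntegrableOn (fun y => Real.exp (-((ω - t) * y))) (Ioi (0:ℝ)) := by
      simpa only [neg_mul] using exp_neg_integrableOn_Ioi 0 hr1
    have I2 : IntegrableOn (fun y => Real.exp (-((2 * ω - t) * y))) (Ioi (0:ℝ)) := by
      simpa only [neg_mul] using exp_neg_integrableOn_Ioi 0 hr2
    have I3 := integ_mul_exp hr2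
    have Iab : Integrable (fun y => c * ω * Real.exp (-((ω - t) * y))
        + c * (2 * η) * Real.exp (-((2 * ω - t) * y))) (volume.restrict (Ioi 0)) :=
      (I1.const_mul _).add (I2.const_mul _)
    have Ia : Integrable (fun y => c * ω * Real.exp (-((ω - t) * y)))
        (volume.restrict (Ioi 0)) := I1.const_mul _
    have Ib : Integrable (fun y => c * (2 * η) * Real.exp (-((2 * ω - t) * y)))
        (volume.restrict (Ioi 0)) := I2.const_mul _
    have Ic : Integrable (fun y => c * (8 * ω * η) * (y * Real.exp (-((2 * ω - t) * y))))
        (volume.restrict (Ioi 0)) := I3.const_mul _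
    calc (∫ y in Set.Ioi (0 : ℝ), Real.exp (t * y) * shihaPdf ω η y)
        = ∫ y in Set.Ioi (0 : ℝ),
            (c * ω * Real.exp (-((ω - t) * y)) + c * (2 * η) * Real.exp (-((2 * ω - t) * y))
              + c * (8 * ω * η) * (y * Real.exp (-((2 * ω - t) * y)))) := by
          simp only [key]
      _ = c * (ω / (ω - t) + 2 * η / (2 * ω - t) + 8 * ω * η / (2 * ω - t) ^ 2) := by
          rw [integral_add Iab Ic, integral_add Ia Ib,
              integral_const_mul, integral_const_mul, integral_const_mul,
              int_exp hr1, int_exp hr2, int_mul_exp hr2]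
          ring
  · rw [hc]
    rw [div_add_div _ _ hr1.ne' hr2.ne', div_add_div _ _ (mul_ne_zero hr1.ne' hr2.ne')
      (pow_ne_zero 2 hr2.ne'), div_mul_div_comm, div_eq_div_iff (by positivity) (by positivity)]
    ring
end

section
/- For all ω > 0, η > 0 and every positive integer k, the k-th raw moment of the Shiha distribution satisfies ∫₀^∞ y^k f(y; ω, η) dy = (2^k ω + 2ηk + 3η) · k! / (2^k ω^k (ω + 3η)). -/
open Real MeasureTheory

lemma shiha_key (a : ℝ) (ha : 0 < a) (k : ℕ) :
    ∫ y in Set.Ioi (0 : ℝ), y ^ k * Real.exp (-(a * y))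
      = (Nat.factorial k) / a ^ (k + 1) := by
  have h := Real.integral_rpow_mul_exp_neg_mul_Ioi (a := (k + 1 : ℝ))
    (r := a) (by positivity) ha
  have heq : ∫ y in Set.Ioi (0 : ℝ), y ^ k * Real.exp (-(a * y))
      = ∫ t in Set.Ioi (0 : ℝ), t ^ ((k + 1 : ℝ) - 1) * Real.exp (-(a * t)) := by
    refine setIntegral_congr_fun measurableSet_Ioi (fun t ht ↦ ?_)
    rw [show (k + 1 : ℝ) - 1 = (k : ℝ) by ring,
      Real.rpow_natCast]
  have hpow : (1/a) ^ ((k:ℝ)+1) = (1/a)^(k+1) := by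
    rw [← Real.rpow_natCast (1/a) (k+1)]; push_cast; ring_nf
  rw [heq, h, hpow, Real.Gamma_nat_eq_factorial, one_div, inv_pow]
  field_simp

lemma shiha_integrable (a : ℝ) (ha : 0 < a) (k : ℕ) :
    IntegrableOn (fun y : ℝ => y ^ k * Real.exp (-(a * y))) (Set.Ioi 0) := by
  have h := integrableOn_rpow_mul_exp_neg_mul_rpow (p := 1) (s := (k : ℝ)) (b := a)
    (lt_of_lt_of_le neg_one_lt_zero (Nat.cast_nonneg k)) one_pos ha
  refine h.congr_fun (fun t ht ↦ ?_) measurableSet_Ioi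
  dsimp only
  rw [Real.rpow_natCast, Real.rpow_one, neg_mul]

theorem shiha_raw_moments (ω η : ℝ) (hω : 0 < ω) (hη : 0 < η) (k : ℕ) (hk : 0 < k) :
    (∫ y in Set.Ioi (0 : ℝ), y ^ k * shihaPdf ω η y)
      = (2 ^ k * ω + 2 * η * k + 3 * η) * (Nat.factorial k)
        / (2 ^ k * ω ^ k * (ω + 3 * η)) := by
  set C : ℝ := ω / (ω + 3 * η) with hC
  have h2ω : (0:ℝ) < 2 * ω := by linarith
  have heq : ∀ y ∈ Set.Ioi (0:ℝ), y ^ k * shihaPdf ω η y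
      = (C * ω) * (y ^ k * Real.exp (-(ω * y)))
        + (C * (2 * η)) * (y ^ k * Real.exp (-(2 * ω * y)))
        + (C * (8 * ω * η)) * (y ^ (k + 1) * Real.exp (-(2 * ω * y))) := by
    intro y _
    have h1 : Real.exp (-(ω * y)) = Real.exp (-ω * y) := by ring_nf
    have h2 : Real.exp (-(2 * ω * y)) = Real.exp (-ω * y) * Real.exp (-ω * y) := by
      rw [← Real.exp_add]; ring_nf
    simp only [shihaPdf, hC, h1, h2]
    ring
  rw [setIntegral_congr_fun measurableSet_Ioi heq]
  have i1 := (shiha_integrable ω hω k).const_mul (C * ω)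
  have i2 := (shiha_integrable (2*ω) h2ω k).const_mul (C * (2 * η))
  have i3 := (shiha_integrable (2*ω) h2ω (k+1)).const_mul (C * (8 * ω * η))
  have i12 : Integrable (fun x : ℝ => C * ω * (x ^ k * Real.exp (-(ω * x)))
      + C * (2 * η) * (x ^ k * Real.exp (-(2 * ω * x)))) (volume.restrict (Set.Ioi 0)) :=
    i1.add i2
  rw [integral_add i12 i3, integral_add i1 i2,
    integral_const_mul, integral_const_mul, integral_const_mul,
    shiha_key ω hω k, shiha_key (2*ω) h2ω k, shiha_key (2*ω) h2ω (k+1)]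
  have hfac : (Nat.factorial (k+1) : ℝ) = (k + 1) * Nat.factorial k := by
    rw [Nat.factorial_succ]; push_cast; ring
  have hpow1 : (2*ω) ^ (k+1) = 2^(k+1) * ω^(k+1) := by rw [mul_pow]
  have hpow2 : (2*ω) ^ (k+2) = 2^(k+2) * ω^(k+2) := by rw [mul_pow]
  rw [hfac, hpow1, hpow2, hC]
  have h1 : ω + 3 * η ≠ 0 := by positivity
  have h2 : (ω:ℝ) ≠ 0 := hω.ne'
  have h3 : (2:ℝ)^k ≠ 0 := by positivity
  field_simp
  ring
end

section
/- For all ω > 0 and η > 0, the variance of the Shiha distribution satisfies ∫₀^∞ y² f(y; ω, η) dy − (∫₀^∞ y f(y; ω, η) dy)² = (17η² + 18ηω + 4ω²) / (4ω² (ω + 3η)²). In particular the mean is (2ω + 5η)/(2ω(ω + 3η)) and the second raw moment is (4ω + 7η)/(2ω²(ω + 3η)). -/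
open Real MeasureTheory

lemma shiha_aux_int (n : ℕ) {b : ℝ} (hb : 0 < b) :
    IntegrableOn (fun y : ℝ => y ^ n * Real.exp (-(b * y))) (Set.Ioi 0) := by
  have h := integrableOn_rpow_mul_exp_neg_mul_rpow (s := (n : ℝ)) (p := 1) (b := b)
    (by exact neg_one_lt_zero.trans_le (Nat.cast_nonneg n)) one_pos hb
  refine h.congr_fun (fun x hx => ?_) measurableSet_Ioi
  dsimp only
  rw [Real.rpow_natCast, Real.rpow_one, neg_mul]

lemma shiha_aux_val (n : ℕ) {b : ℝ} (hb : 0 < b) :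
    ∫ y in Set.Ioi (0 : ℝ), y ^ n * Real.exp (-(b * y))
      = (n.factorial : ℝ) / b ^ (n + 1) := by
  have h := Real.integral_rpow_mul_exp_neg_mul_Ioi (a := (n : ℝ) + 1) (r := b)
    (by positivity) hb
  rw [show ((n : ℝ) + 1) - 1 = (n : ℝ) by ring] at h
  rw [Real.Gamma_nat_eq_factorial,
    show ((n : ℝ) + 1) = ((n + 1 : ℕ) : ℝ) by push_cast; ring, Real.rpow_natCast] at h
  calc ∫ y in Set.Ioi (0 : ℝ), y ^ n * Real.exp (-(b * y))
      = ∫ y in Set.Ioi (0 : ℝ), y ^ (n : ℝ) * Real.exp (-(b * y)) := by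
        refine setIntegral_congr_fun measurableSet_Ioi (fun x hx => ?_)
        rw [Real.rpow_natCast]
    _ = (1 / b) ^ (n + 1) * (n.factorial : ℝ) := h
    _ = (n.factorial : ℝ) / b ^ (n + 1) := by
        rw [div_pow, one_pow]; ring

lemma shiha_expand (ω η : ℝ) (y : ℝ) (k : ℕ) :
    y ^ k * shihaPdf ω η y
      = ω / (ω + 3 * η) *
        (ω * (y ^ k * Real.exp (-(ω * y)))
          + (2 * η) * (y ^ k * Real.exp (-(2 * ω * y)))
          + (8 * ω * η) * (y ^ (k + 1) * Real.exp (-(2 * ω * y)))) := by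
  unfold shihaPdf
  have h2 : Real.exp (-ω * y) * Real.exp (-ω * y) = Real.exp (-(2 * ω * y)) := by
    rw [← Real.exp_add]; ring_nf
  have h1 : Real.exp (-ω * y) = Real.exp (-(ω * y)) := by ring_nf
  rw [← h1, ← h2]; ring

lemma shiha_moment (ω η : ℝ) (hω : 0 < ω) (hη : 0 < η) (k : ℕ) :
    ∫ y in Set.Ioi (0 : ℝ), y ^ k * shihaPdf ω η y
      = ω / (ω + 3 * η) *
        (ω * ((k.factorial : ℝ) / ω ^ (k + 1))
          + (2 * η) * ((k.factorial : ℝ) / (2 * ω) ^ (k + 1))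
          + (8 * ω * η) * (((k + 1).factorial : ℝ) / (2 * ω) ^ (k + 2))) := by
  have h2ω : (0 : ℝ) < 2 * ω := by linarith
  have i1 := shiha_aux_int k hω
  have i2 := shiha_aux_int k h2ω
  have i3 := shiha_aux_int (k + 1) h2ω
  rw [setIntegral_congr_fun measurableSet_Ioi
    (fun y (_ : y ∈ Set.Ioi (0:ℝ)) => shiha_expand ω η y k)]
  have iA : Integrable (fun a : ℝ => ω * (a ^ k * Real.exp (-(ω * a)))
      + 2 * η * (a ^ k * Real.exp (-(2 * ω * a)))) (volume.restrict (Set.Ioi 0)) :=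
    (i1.const_mul ω).add (i2.const_mul (2 * η))
  rw [integral_const_mul, integral_add iA (i3.const_mul (8 * ω * η)),
    integral_add (i1.const_mul ω) (i2.const_mul (2 * η)),
    integral_const_mul, integral_const_mul, integral_const_mul,
    shiha_aux_val k hω, shiha_aux_val k h2ω, shiha_aux_val (k + 1) h2ω]

theorem shiha_variance (ω η : ℝ) (hω : 0 < ω) (hη : 0 < η) :
    (∫ y in Set.Ioi (0 : ℝ), y ^ 2 * shihaPdf ω η y)
      - (∫ y in Set.Ioi (0 : ℝ), y * shihaPdf ω η y) ^ 2
      = (17 * η ^ 2 + 18 * η * ω + 4 * ω ^ 2) / (4 * ω ^ 2 * (ω + 3 * η) ^ 2) ∧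
    (∫ y in Set.Ioi (0 : ℝ), y * shihaPdf ω η y)
      = (2 * ω + 5 * η) / (2 * ω * (ω + 3 * η)) ∧
    (∫ y in Set.Ioi (0 : ℝ), y ^ 2 * shihaPdf ω η y)
      = (4 * ω + 7 * η) / (2 * ω ^ 2 * (ω + 3 * η)) := by
  have hsum : (0 : ℝ) < ω + 3 * η := by linarith
  have h1 : (∫ y in Set.Ioi (0 : ℝ), y * shihaPdf ω η y)
      = (2 * ω + 5 * η) / (2 * ω * (ω + 3 * η)) := by
    have := shiha_moment ω η hω hη 1
    simp only [pow_one] at this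
    rw [this]
    norm_num [Nat.factorial]
    field_simp
    ring
  have h2 : (∫ y in Set.Ioi (0 : ℝ), y ^ 2 * shihaPdf ω η y)
      = (4 * ω + 7 * η) / (2 * ω ^ 2 * (ω + 3 * η)) := by
    rw [shiha_moment ω η hω hη 2]
    norm_num [Nat.factorial]
    field_simp
    ring
  refine ⟨?_, h1, h2⟩
  rw [h1, h2]
  field_simp
  ring
end
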